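/- Let L : Ω → (−∞,0) be a C² function on an open convex cone Ω ⊆ ℝⁿ, positively 2-homogeneous, with Hessian of signature (−,+,…,+) at every point of Ω. For q ∈ (0,1) define L_q(v) = −(1/q)·(−2L(v))^{q/2} on Ω. Then L_q is strictly convex on Ω. -/

import Mathlib

lemma qLag_key_ineq {n : ℕ} [NeZero n] (Q : (Fin n → ℝ) → (Fin n → ℝ) → ℝ)
    (hQ : ∀ x y, Q x y = ∑ j, (if j = (0 : Fin n) then (-1 : ℝ) else 1) * x j * y j)
    (x y : Fin n → ℝ) (hx : Q x x < 0) (hy : y ≠ 0) {q : ℝ} (hq : q ∈ Set.Ioo (0:ℝ) 1) :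
    0 < (2 - q) * (Q x y) ^ 2 - Q x x * Q y y := by
  obtain ⟨hq0, hq1⟩ := hq
  have hx0 : x 0 ≠ 0 := by
    intro h0
    have : 0 ≤ Q x x := by
      rw [hQ]
      refine Finset.sum_nonneg fun j _ => ?_
      by_cases hj : j = 0
      · simp [hj, h0]
      · rw [if_neg hj, one_mul]; exact mul_self_nonneg _
    linarith
  set t : ℝ := -(y 0) / (x 0) with ht
  set z : Fin n → ℝ := fun j => y j + t * x j with hz
  have hz0 : z 0 = 0 := by
    simp only [hz, ht]
    field_simp
    ring
  have hterm : ∀ j, (if j = (0:Fin n) then (-1:ℝ) else 1) * z j * z j ≥ 0 ∨ j = 0 := by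
    intro j
    by_cases hj : j = 0
    · exact Or.inr hj
    · left; rw [if_neg hj, one_mul]; exact mul_self_nonneg _
  have hdnn : ∀ j, 0 ≤ (if j = (0:Fin n) then (-1:ℝ) else 1) * z j * z j := by
    intro j
    by_cases hj : j = 0
    · simp [hj, hz0]
    · rw [if_neg hj, one_mul]; exact mul_self_nonneg _
  have hd : 0 ≤ Q z z := by
    rw [hQ]; exact Finset.sum_nonneg fun j _ => hdnn j
  have hexp : Q z z = Q y y + 2 * t * Q x y + t ^ 2 * Q x x := by
    rw [hQ, hQ, hQ, hQ, Finset.mul_sum, Finset.mul_sum, ← Finset.sum_add_distrib,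
      ← Finset.sum_add_distrib]
    exact Finset.sum_congr rfl fun j _ => by simp only [hz]; ring
  rcases eq_or_lt_of_le hd with hd0 | hdpos
  · -- all z j = 0, so y = -t • x
    have hzall : ∀ j, z j = 0 := by
      intro j
      have hsum := (Finset.sum_eq_zero_iff_of_nonneg (fun i _ => hdnn i)).1
        (by rw [← hQ]; exact hd0.symm) j (Finset.mem_univ j)
      by_cases hj : j = 0
      · rw [hj]; exact hz0
      · rw [if_neg hj, one_mul] at hsum
        exact mul_self_eq_zero.1 hsum
    have hyt : ∀ j, y j = -t * x j := fun j => by have := hzall j; simp only [hz] at this; linarith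
    have htne : t ≠ 0 := by
      intro h0
      apply hy
      funext j
      show y j = (0 : ℝ)
      rw [hyt j, h0]; ring
    have hqxy : Q x y = -t * Q x x := by
      rw [hQ, hQ, Finset.mul_sum]
      exact Finset.sum_congr rfl fun j _ => by rw [hyt j]; ring
    have hqyy : Q y y = t ^ 2 * Q x x := by
      rw [hQ, hQ, Finset.mul_sum]
      exact Finset.sum_congr rfl fun j _ => by rw [hyt j]; ring
    rw [hqxy, hqyy]
    have h1 : 0 < t ^ 2 * (Q x x) ^ 2 := mul_pos (sq_pos_of_ne_zero htne) (sq_pos_of_ne_zero hx.ne)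
    nlinarith
  · -- strict reverse Cauchy-Schwarz
    nlinarith [sq_nonneg (Q x y + t * Q x x), sq_nonneg (Q x y), mul_pos (neg_pos.2 hx) hdpos]

/-- Strict convexity of the q-Lagrangian `L_q = -(1/q)(-2L)^{q/2}` on the timelike cone,
for a positively 2-homogeneous Lorentz–Finsler Lagrangian `L` with Hessian of
signature `(-,+,…,+)` at every point of the cone. -/
theorem qLagrangian_strictConvexOn {n : ℕ} [NeZero n]
    (Ω : Set (Fin n → ℝ)) (hopen : IsOpen Ω) (hconv : Convex ℝ Ω)
    (hcone : ∀ c : ℝ, 0 < c → ∀ v ∈ Ω, c • v ∈ Ω)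
    (L : (Fin n → ℝ) → ℝ)
    (hneg : ∀ v ∈ Ω, L v < 0)
    (hhom : ∀ c : ℝ, 0 < c → ∀ v ∈ Ω, L (c • v) = c ^ 2 * L v)
    (hC2 : ContDiffOn ℝ 2 L Ω)
    (hsig : ∀ v ∈ Ω, ∃ b : Module.Basis (Fin n) ℝ (Fin n → ℝ),
      ∀ i j : Fin n,
        (fderiv ℝ (fun w => fderiv ℝ L w (b i)) v) (b j) =
          if i = j then (if i = (0 : Fin n) then (-1 : ℝ) else 1) else 0)
    (q : ℝ) (hq : q ∈ Set.Ioo (0 : ℝ) 1) :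
    StrictConvexOn ℝ Ω (fun v => -(1 / q) * (-2 * L v) ^ (q / 2)) := by
  obtain ⟨hq0, hq1⟩ := hq
  -- basic differentiability facts
  have hL' : ∀ v ∈ Ω, HasFDerivAt L (fderiv ℝ L v) v := fun v hv =>
    ((hC2.contDiffAt (hopen.mem_nhds hv)).differentiableAt (by norm_num)).hasFDerivAt
  have hdf : ∀ v ∈ Ω, DifferentiableAt ℝ (fderiv ℝ L) v := fun v hv =>
    (((hC2.contDiffAt (hopen.mem_nhds hv)).fderiv_right (by norm_num : (1:WithTop ℕ∞) + 1 ≤ 2)).differentiableAt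
      one_ne_zero)
  -- scaling of the differential
  have hscale : ∀ c : ℝ, 0 < c → ∀ v ∈ Ω, ∀ u₀, fderiv ℝ L (c • v) u₀ = c * fderiv ℝ L v u₀ := by
    intro c hc v hv u₀
    have h1 : HasFDerivAt (fun u => L (c • u))
        ((fderiv ℝ L (c • v)).comp (c • ContinuousLinearMap.id ℝ (Fin n → ℝ))) v :=
      (hL' _ (hcone c hc v hv)).comp v
        ((c • ContinuousLinearMap.id ℝ (Fin n → ℝ)).hasFDerivAt)
    have h2 : HasFDerivAt (fun u => c ^ 2 * L u) ((c ^ 2) • fderiv ℝ L v) v :=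
      (hL' v hv).const_mul (c ^ 2)
    have heq : (fun u => c ^ 2 * L u) =ᶠ[nhds v] fun u => L (c • u) := by
      filter_upwards [hopen.mem_nhds hv] with u hu
      exact (hhom c hc u hu).symm
    have h3 := (h1.congr_of_eventuallyEq heq).unique h2
    have h4 := congrFun (congrArg DFunLike.coe h3) u₀
    simp only [ContinuousLinearMap.coe_comp', Function.comp_apply,
      ContinuousLinearMap.smul_apply, ContinuousLinearMap.coe_id', id_eq,
      ContinuousLinearMap.coe_smul', Pi.smul_apply, smul_eq_mul, map_smul] at h4
    have hcne : c ≠ 0 := ne_of_gt hc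
    refine mul_left_cancel₀ hcne ?_
    linear_combination h4
  -- Euler identity for the second derivative: D²L(v) v = DL(v)
  have hEuler2 : ∀ v ∈ Ω, ∀ u₀, (fderiv ℝ (fderiv ℝ L) v v) u₀ = fderiv ℝ L v u₀ := by
    intro v hv u₀
    have hcv : HasDerivAt (fun c : ℝ => c • v) v 1 := by
      simpa using (hasDerivAt_id (1:ℝ)).smul_const v
    have hF : HasFDerivAt (fderiv ℝ L) (fderiv ℝ (fderiv ℝ L) v) ((fun c : ℝ => c • v) 1) := by
      simpa using (hdf v hv).hasFDerivAt
    have h1 : HasDerivAt (fun c : ℝ => fderiv ℝ L (c • v)) (fderiv ℝ (fderiv ℝ L) v v) 1 :=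
      hF.comp_hasDerivAt 1 hcv
    have h2 : HasDerivAt (fun c : ℝ => fderiv ℝ L (c • v) u₀)
        ((fderiv ℝ (fderiv ℝ L) v v) u₀) 1 := by
      have := h1.clm_apply (hasDerivAt_const 1 u₀)
      simpa using this
    have h3 : HasDerivAt (fun c : ℝ => c * fderiv ℝ L v u₀) (fderiv ℝ L v u₀) 1 := by
      simpa using (hasDerivAt_id (1:ℝ)).mul_const (fderiv ℝ L v u₀)
    have heq : (fun c : ℝ => c * fderiv ℝ L v u₀) =ᶠ[nhds 1]
        fun c : ℝ => fderiv ℝ L (c • v) u₀ := by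
      filter_upwards [IsOpen.mem_nhds isOpen_Ioi (by norm_num : (1:ℝ) ∈ Set.Ioi 0)] with c hc
      exact (hscale c hc v hv u₀).symm
    exact h2.unique (h3.congr_of_eventuallyEq heq.symm)
  -- Euler identity: DL(v) v = 2 L v
  have hEuler1 : ∀ v ∈ Ω, fderiv ℝ L v v = 2 * L v := by
    intro v hv
    have hcv : HasDerivAt (fun c : ℝ => c • v) v 1 := by
      simpa using (hasDerivAt_id (1:ℝ)).smul_const v
    have h1 : HasDerivAt (fun c : ℝ => L (c • v)) (fderiv ℝ L v v) 1 := by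
      have hF : HasFDerivAt L (fderiv ℝ L v) ((fun c : ℝ => c • v) 1) := by
        simpa using hL' v hv
      exact hF.comp_hasDerivAt 1 hcv
    have h2 : HasDerivAt (fun c : ℝ => c ^ 2 * L v) (2 * L v) 1 := by
      have := (hasDerivAt_pow 2 (1:ℝ)).mul_const (L v)
      simpa using this
    have heq : (fun c : ℝ => c ^ 2 * L v) =ᶠ[nhds 1] fun c : ℝ => L (c • v) := by
      filter_upwards [IsOpen.mem_nhds isOpen_Ioi (by norm_num : (1:ℝ) ∈ Set.Ioi 0)] with c hc
      exact (hhom c hc v hv).symm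
    exact h1.unique (h2.congr_of_eventuallyEq heq.symm)
  -- expansion of the second derivative in the diagonalizing basis
  have hQexp : ∀ v ∈ Ω, ∃ b : Module.Basis (Fin n) ℝ (Fin n → ℝ), ∀ u₁ u₂ : Fin n → ℝ,
      fderiv ℝ (fderiv ℝ L) v u₁ u₂ =
        ∑ j, (if j = (0 : Fin n) then (-1 : ℝ) else 1) * (b.repr u₁ j) * (b.repr u₂ j) := by
    intro v hv
    obtain ⟨b, hb⟩ := hsig v hv
    refine ⟨b, fun u₁ u₂ => ?_⟩
    have hb' : ∀ i j : Fin n, fderiv ℝ (fderiv ℝ L) v (b j) (b i) =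
        if i = j then (if i = (0 : Fin n) then (-1 : ℝ) else 1) else 0 := by
      intro i j
      have h1 := fderiv_clm_apply (hdf v hv) (differentiableAt_const (b i))
      have h2 := congrFun (congrArg DFunLike.coe h1) (b j)
      simp only [fderiv_const, fderiv_const_apply, Pi.zero_apply, ContinuousLinearMap.comp_zero,
        ContinuousLinearMap.zero_apply, zero_add, ContinuousLinearMap.add_apply,
        ContinuousLinearMap.flip_apply] at h2
      rw [← h2]
      exact hb i j
    have e1 : u₁ = ∑ i, b.repr u₁ i • b i := (b.sum_repr u₁).symm
    have e2 : u₂ = ∑ j, b.repr u₂ j • b j := (b.sum_repr u₂).symm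
    conv_lhs => rw [e1, e2]
    simp only [map_sum, map_smul, ContinuousLinearMap.sum_apply,
      ContinuousLinearMap.smul_apply, smul_eq_mul, hb']
    simp only [mul_ite, mul_zero, Finset.sum_ite_eq, Finset.mem_univ, if_true]
    exact Finset.sum_congr rfl fun i _ => by by_cases h : i = 0 <;> simp [h] <;> ring

  constructor
  · exact hconv
  intro x hx y hy hxy a b ha hb hab
  set w : Fin n → ℝ := y - x with hwdef
  have hwne : w ≠ 0 := sub_ne_zero.2 (Ne.symm hxy)
  set γ : ℝ → (Fin n → ℝ) := fun t => x + t • w with hγdef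
  set D : Set ℝ := γ ⁻¹' Ω with hDdef
  have hγcont : Continuous γ := continuous_const.add (continuous_id.smul continuous_const)
  have hDopen : IsOpen D := hopen.preimage hγcont
  have hDconv : Convex ℝ D := by
    intro t₁ h₁ t₂ h₂ a' b' ha' hb' hab'
    have key : γ (a' • t₁ + b' • t₂) = a' • γ t₁ + b' • γ t₂ := by
      simp only [hγdef, smul_eq_mul]
      have hb'' : b' = 1 - a' := by linarith
      subst hb''
      module
    show γ _ ∈ Ω
    rw [key]
    exact hconv h₁ h₂ ha' hb' hab'
  set g : ℝ → ℝ := fun t => -(1/q) * (-2 * L (γ t)) ^ (q/2) with hgdef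
  set g₁ : ℝ → ℝ := fun t => (-2 * L (γ t)) ^ (q/2 - 1) * fderiv ℝ L (γ t) w with hg₁def
  have hγ' : ∀ t : ℝ, HasDerivAt γ w t := by
    intro t
    simpa [hγdef] using ((hasDerivAt_id t).smul_const w).const_add x
  have hg' : ∀ t ∈ D, HasDerivAt g (g₁ t) t := by
    intro t ht
    have hp : γ t ∈ Ω := ht
    have hup : 0 < -2 * L (γ t) := by nlinarith [hneg _ hp]
    have hℓ : HasDerivAt (fun s => L (γ s)) (fderiv ℝ L (γ t) w) t :=
      (hL' _ hp).comp_hasDerivAt t (hγ' t)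
    have hu : HasDerivAt (fun s => -2 * L (γ s)) (-2 * fderiv ℝ L (γ t) w) t := hℓ.const_mul (-2)
    have hrpow : HasDerivAt (fun s : ℝ => s ^ (q/2))
        (q/2 * (-2 * L (γ t)) ^ (q/2 - 1)) (-2 * L (γ t)) :=
      Real.hasDerivAt_rpow_const (Or.inl hup.ne')
    have hcomp : HasDerivAt (fun s : ℝ => (-2 * L (γ s)) ^ (q/2))
        (q/2 * (-2 * L (γ t)) ^ (q/2 - 1) * (-2 * fderiv ℝ L (γ t) w)) t := by
      simpa [Function.comp_def] using hrpow.comp t hu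
    have hfin := hcomp.const_mul (-(1/q))
    have heqd : -(1/q) * (q/2 * (-2 * L (γ t)) ^ (q/2 - 1) * (-2 * fderiv ℝ L (γ t) w))
        = g₁ t := by
      simp only [hg₁def]
      field_simp
    rw [heqd] at hfin
    exact hfin
  have hg₁' : ∀ t ∈ D, HasDerivAt g₁
      ((q/2 - 1) * (-2 * L (γ t)) ^ (q/2 - 2) * (-2 * fderiv ℝ L (γ t) w) * fderiv ℝ L (γ t) w
        + (-2 * L (γ t)) ^ (q/2 - 1) * (fderiv ℝ (fderiv ℝ L) (γ t) w w)) t := by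
    intro t ht
    have hp : γ t ∈ Ω := ht
    have hup : 0 < -2 * L (γ t) := by nlinarith [hneg _ hp]
    have hℓ : HasDerivAt (fun s => L (γ s)) (fderiv ℝ L (γ t) w) t :=
      (hL' _ hp).comp_hasDerivAt t (hγ' t)
    have hu : HasDerivAt (fun s => -2 * L (γ s)) (-2 * fderiv ℝ L (γ t) w) t := hℓ.const_mul (-2)
    have hrpow : HasDerivAt (fun s : ℝ => s ^ (q/2 - 1))
        ((q/2 - 1) * (-2 * L (γ t)) ^ (q/2 - 2)) (-2 * L (γ t)) := by
      have := Real.hasDerivAt_rpow_const (x := -2 * L (γ t)) (p := q/2 - 1) (Or.inl hup.ne')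
      have e : q/2 - 1 - 1 = q/2 - 2 := by ring
      rwa [e] at this
    have hA : HasDerivAt (fun s : ℝ => (-2 * L (γ s)) ^ (q/2 - 1))
        ((q/2 - 1) * (-2 * L (γ t)) ^ (q/2 - 2) * (-2 * fderiv ℝ L (γ t) w)) t := by
      simpa [Function.comp_def] using hrpow.comp t hu
    have hB : HasDerivAt (fun s : ℝ => fderiv ℝ L (γ s) w)
        (fderiv ℝ (fderiv ℝ L) (γ t) w w) t := by
      have h1 : HasDerivAt (fun s : ℝ => fderiv ℝ L (γ s))
          (fderiv ℝ (fderiv ℝ L) (γ t) w) t := by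
        have := ((hdf _ hp).hasFDerivAt).comp_hasDerivAt t (hγ' t)
        simpa [Function.comp_def] using this
      have := h1.clm_apply (hasDerivAt_const t w)
      simpa using this
    exact hA.mul hB
  have hpos : ∀ t ∈ D,
      0 < (q/2 - 1) * (-2 * L (γ t)) ^ (q/2 - 2) * (-2 * fderiv ℝ L (γ t) w) * fderiv ℝ L (γ t) w
        + (-2 * L (γ t)) ^ (q/2 - 1) * (fderiv ℝ (fderiv ℝ L) (γ t) w w) := by
    intro t ht
    have hp : γ t ∈ Ω := ht
    have hup : 0 < -2 * L (γ t) := by nlinarith [hneg _ hp]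
    obtain ⟨bb, hbb⟩ := hQexp (γ t) hp
    have hrw : ∀ j : Fin n, True := fun _ => trivial
    -- coordinates
    have hpp : fderiv ℝ (fderiv ℝ L) (γ t) (γ t) (γ t) = 2 * L (γ t) := by
      rw [hEuler2 _ hp, hEuler1 _ hp]
    have hpw : fderiv ℝ (fderiv ℝ L) (γ t) (γ t) w = fderiv ℝ L (γ t) w := hEuler2 _ hp w
    have hyne : (fun j => bb.repr w j : Fin n → ℝ) ≠ 0 := by
      intro h0
      apply hwne
      have hz : bb.repr w = 0 := by
        ext j
        exact congrFun h0 j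
      have := congrArg bb.repr.symm hz
      simpa using this
    have hxx : (∑ j, (if j = (0 : Fin n) then (-1:ℝ) else 1) * bb.repr (γ t) j * bb.repr (γ t) j)
        < 0 := by
      rw [← hbb, hpp]
      nlinarith [hneg _ hp]
    have key : 0 < (2 - q) *
          (∑ j, (if j = (0 : Fin n) then (-1:ℝ) else 1) * bb.repr (γ t) j * bb.repr w j) ^ 2
        - (∑ j, (if j = (0 : Fin n) then (-1:ℝ) else 1) * bb.repr (γ t) j * bb.repr (γ t) j)
        * (∑ j, (if j = (0 : Fin n) then (-1:ℝ) else 1) * bb.repr w j * bb.repr w j) :=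
      qLag_key_ineq
        (fun z₁ z₂ => ∑ j, (if j = (0 : Fin n) then (-1:ℝ) else 1) * z₁ j * z₂ j)
        (fun _ _ => rfl) (fun j => bb.repr (γ t) j) (fun j => bb.repr w j)
        hxx hyne ⟨hq0, hq1⟩
    rw [← hbb, ← hbb, ← hbb] at key
    -- key : 0 < (2-q) * (H p w)^2 - (H p p) * (H w w)
    rw [hpp, hpw] at key
    have hr1 : 0 < (-2 * L (γ t)) ^ (q/2 - 2) := Real.rpow_pos_of_pos hup _
    have hr2 : (-2 * L (γ t)) ^ (q/2 - 1)
        = (-2 * L (γ t)) ^ (q/2 - 2) * (-2 * L (γ t)) := by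
      rw [show q/2 - 1 = (q/2 - 2) + 1 by ring, Real.rpow_add hup, Real.rpow_one]
    rw [hr2]
    nlinarith [mul_pos hr1 key]
  have hgc : StrictConvexOn ℝ D g := by
    refine strictConvexOn_of_deriv2_pos hDconv
      (fun t ht => (hg' t ht).continuousAt.continuousWithinAt) ?_
    intro t ht
    rw [hDopen.interior_eq] at ht
    have hev : deriv g =ᶠ[nhds t] g₁ := by
      filter_upwards [hDopen.mem_nhds ht] with s hs
      exact (hg' s hs).deriv
    have h2 : (deriv^[2] g) t = deriv (deriv g) t := rfl
    rw [h2, hev.deriv_eq, (hg₁' t ht).deriv]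
    exact hpos t ht
  have h0D : (0:ℝ) ∈ D := by
    show γ 0 ∈ Ω
    simpa [hγdef] using hx
  have h1D : (1:ℝ) ∈ D := by
    show γ 1 ∈ Ω
    have e1 : γ 1 = y := by simp [hγdef, hwdef]
    rwa [e1]
  have hfin := hgc.2 h0D h1D (by norm_num : (0:ℝ) ≠ 1) ha hb hab
  simp only [smul_eq_mul, mul_zero, mul_one, zero_add] at hfin
  have e0 : γ 0 = x := by simp [hγdef]
  have e1 : γ 1 = y := by simp [hγdef, hwdef]
  have eb : γ b = a • x + b • y := by
    simp only [hγdef, hwdef]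
    have ha' : a = 1 - b := by linarith
    subst ha'
    module
  simp only [hgdef, e0, e1, eb, smul_eq_mul] at hfin
  simpa [smul_eq_mul] using hfin
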